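/- Kummer's transformation: for all a, b, z with b not a nonpositive integer, M(a,b,z) = e^z · M(b-a, b, -z), where M is the confluent hypergeometric function defined by its power series M(a,b,z) = Σ_{n≥0} ((a)_n/(b)_n) zⁿ/n!. -/

import Mathlib

/-- Kummer's confluent hypergeometric function `M(a,b,z)` defined by its power series. -/
noncomputable def kummerM (a b z : ℝ) : ℝ :=
  ∑' n : ℕ, ((ascPochhammer ℝ n).eval a / (ascPochhammer ℝ n).eval b) * z ^ n / n.factorial

open Finset

lemma asc_eval_add (n m : ℕ) (x : ℝ) :
    (ascPochhammer ℝ (n + m)).eval x =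
      (ascPochhammer ℝ n).eval x * (ascPochhammer ℝ m).eval (x + n) := by
  rw [← ascPochhammer_mul]
  simp [Polynomial.eval_comp]

lemma asc_succ_left_eval (n : ℕ) (x : ℝ) :
    (ascPochhammer ℝ (n + 1)).eval x = x * (ascPochhammer ℝ n).eval (x + 1) := by
  have h := asc_eval_add 1 n x
  rw [Nat.add_comm 1 n] at h
  simpa using h

lemma kummer_key (N : ℕ) : ∀ b c : ℝ,
    ∑ k ∈ range (N + 1), (-1 : ℝ) ^ k * (N.choose k : ℝ) * (ascPochhammer ℝ k).eval c *
      (ascPochhammer ℝ (N - k)).eval (b + k) = (ascPochhammer ℝ N).eval (b - c) := by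
  induction N with
  | zero => intro b c; simp
  | succ N ih =>
    intro b c
    have step1 : ∑ k ∈ range (N + 1 + 1), (-1 : ℝ) ^ k * ((N+1).choose k : ℝ) *
        (ascPochhammer ℝ k).eval c * (ascPochhammer ℝ (N + 1 - k)).eval (b + k)
        = (∑ k ∈ range (N + 1), (-1 : ℝ) ^ (k+1) * ((N+1).choose (k+1) : ℝ) *
            (ascPochhammer ℝ (k+1)).eval c * (ascPochhammer ℝ (N - k)).eval (b + (k+1 : ℕ)))
          + (ascPochhammer ℝ (N + 1)).eval b := by
      rw [Finset.sum_range_succ']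
      simp
    have step2 : ∀ k ∈ range (N + 1),
        (-1 : ℝ) ^ (k+1) * ((N+1).choose (k+1) : ℝ) *
            (ascPochhammer ℝ (k+1)).eval c * (ascPochhammer ℝ (N - k)).eval (b + (k+1 : ℕ))
        = ((-1 : ℝ) ^ (k+1) * (N.choose (k+1) : ℝ) *
            (ascPochhammer ℝ (k+1)).eval c * (ascPochhammer ℝ (N + 1 - (k+1))).eval (b + (k+1 : ℕ)))
          + ((-1 : ℝ) ^ (k+1) * (N.choose k : ℝ) *
            (ascPochhammer ℝ (k+1)).eval c * (ascPochhammer ℝ (N - k)).eval (b + (k+1 : ℕ))) := by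
      intro k hk
      rw [Nat.succ_sub_succ, Nat.choose_succ_succ]
      push_cast
      ring
    have step3 : (∑ k ∈ range (N + 1), (-1 : ℝ) ^ (k+1) * (N.choose (k+1) : ℝ) *
            (ascPochhammer ℝ (k+1)).eval c * (ascPochhammer ℝ (N + 1 - (k+1))).eval (b + (k+1 : ℕ)))
          + (ascPochhammer ℝ (N + 1)).eval b
        = ∑ k ∈ range (N + 1), (-1 : ℝ) ^ k * (N.choose k : ℝ) *
            (ascPochhammer ℝ k).eval c * (ascPochhammer ℝ (N + 1 - k)).eval (b + k) := by
      have h2 := Finset.sum_range_succ (fun k => (-1 : ℝ) ^ k * (N.choose k : ℝ) *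
            (ascPochhammer ℝ k).eval c * (ascPochhammer ℝ (N + 1 - k)).eval (b + k)) (N+1)
      rw [Finset.sum_range_succ' (fun k => (-1 : ℝ) ^ k * (N.choose k : ℝ) *
            (ascPochhammer ℝ k).eval c * (ascPochhammer ℝ (N + 1 - k)).eval (b + k)) (N+1)] at h2
      simpa [Nat.choose_succ_self] using h2
    have step4 : ∀ k ∈ range (N + 1),
        ((-1 : ℝ) ^ k * (N.choose k : ℝ) *
            (ascPochhammer ℝ k).eval c * (ascPochhammer ℝ (N + 1 - k)).eval (b + k))
        + ((-1 : ℝ) ^ (k+1) * (N.choose k : ℝ) *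
            (ascPochhammer ℝ (k+1)).eval c * (ascPochhammer ℝ (N - k)).eval (b + (k+1 : ℕ)))
        = (b - c) * ((-1 : ℝ) ^ k * (N.choose k : ℝ) *
            (ascPochhammer ℝ k).eval c * (ascPochhammer ℝ (N - k)).eval ((b+1) + k)) := by
      intro k hk
      have hk' : k ≤ N := Nat.lt_succ_iff.mp (mem_range.mp hk)
      have h1 : N + 1 - k = (N - k) + 1 := by omega
      rw [h1, asc_succ_left_eval, ascPochhammer_succ_eval]
      push_cast
      rw [show b + ((k:ℝ)+1) = b + k + 1 from by ring, show (b+1) + (k:ℝ) = b + k + 1 from by ring]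
      ring
    calc ∑ k ∈ range (N + 1 + 1), (-1 : ℝ) ^ k * ((N+1).choose k : ℝ) *
          (ascPochhammer ℝ k).eval c * (ascPochhammer ℝ (N + 1 - k)).eval (b + k)
        = (∑ k ∈ range (N + 1), (-1 : ℝ) ^ (k+1) * ((N+1).choose (k+1) : ℝ) *
            (ascPochhammer ℝ (k+1)).eval c * (ascPochhammer ℝ (N - k)).eval (b + (k+1 : ℕ)))
          + (ascPochhammer ℝ (N + 1)).eval b := step1
      _ = (∑ k ∈ range (N + 1),
            (((-1 : ℝ) ^ (k+1) * (N.choose (k+1) : ℝ) *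
            (ascPochhammer ℝ (k+1)).eval c * (ascPochhammer ℝ (N + 1 - (k+1))).eval (b + (k+1 : ℕ)))
          + ((-1 : ℝ) ^ (k+1) * (N.choose k : ℝ) *
            (ascPochhammer ℝ (k+1)).eval c * (ascPochhammer ℝ (N - k)).eval (b + (k+1 : ℕ)))))
          + (ascPochhammer ℝ (N + 1)).eval b := by
            rw [Finset.sum_congr rfl step2]
      _ = ((∑ k ∈ range (N + 1), (-1 : ℝ) ^ (k+1) * (N.choose (k+1) : ℝ) *
            (ascPochhammer ℝ (k+1)).eval c * (ascPochhammer ℝ (N + 1 - (k+1))).eval (b + (k+1 : ℕ)))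
          + (ascPochhammer ℝ (N + 1)).eval b)
          + ∑ k ∈ range (N + 1), (-1 : ℝ) ^ (k+1) * (N.choose k : ℝ) *
            (ascPochhammer ℝ (k+1)).eval c * (ascPochhammer ℝ (N - k)).eval (b + (k+1 : ℕ)) := by
            rw [Finset.sum_add_distrib]; ring
      _ = (∑ k ∈ range (N + 1), (-1 : ℝ) ^ k * (N.choose k : ℝ) *
            (ascPochhammer ℝ k).eval c * (ascPochhammer ℝ (N + 1 - k)).eval (b + k))
          + ∑ k ∈ range (N + 1), (-1 : ℝ) ^ (k+1) * (N.choose k : ℝ) *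
            (ascPochhammer ℝ (k+1)).eval c * (ascPochhammer ℝ (N - k)).eval (b + (k+1 : ℕ)) := by
            rw [step3]
      _ = ∑ k ∈ range (N + 1), (b - c) * ((-1 : ℝ) ^ k * (N.choose k : ℝ) *
            (ascPochhammer ℝ k).eval c * (ascPochhammer ℝ (N - k)).eval ((b+1) + k)) := by
            rw [← Finset.sum_add_distrib, Finset.sum_congr rfl step4]
      _ = (b - c) * ∑ k ∈ range (N + 1), (-1 : ℝ) ^ k * (N.choose k : ℝ) *
            (ascPochhammer ℝ k).eval c * (ascPochhammer ℝ (N - k)).eval ((b+1) + k) := by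
            rw [Finset.mul_sum]
      _ = (b - c) * (ascPochhammer ℝ N).eval ((b+1) - c) := by rw [ih]
      _ = (ascPochhammer ℝ (N+1)).eval (b - c) := by
            rw [asc_succ_left_eval, show b - c + 1 = (b+1) - c from by ring]

lemma asc_ne_zero (b : ℝ) (hb : ∀ k : ℕ, b ≠ -(k : ℝ)) (n : ℕ) :
    (ascPochhammer ℝ n).eval b ≠ 0 := by
  induction n with
  | zero => simp
  | succ n ih =>
    rw [ascPochhammer_succ_eval]
    refine mul_ne_zero ih ?_
    intro h
    exact hb n (by linarith)

lemma kummer_term_summable_norm (a b z : ℝ) (hb : ∀ k : ℕ, b ≠ -(k : ℝ)) :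
    Summable fun n : ℕ =>
      ‖((ascPochhammer ℝ n).eval a / (ascPochhammer ℝ n).eval b) * z ^ n / n.factorial‖ := by
  set f : ℕ → ℝ := fun n =>
    ((ascPochhammer ℝ n).eval a / (ascPochhammer ℝ n).eval b) * z ^ n / n.factorial with hf
  obtain ⟨N₀, hN₀⟩ := exists_nat_ge (2 * |b| + 2 * |a| + 8 * |z|)
  have key : ∀ n : ℕ, N₀ ≤ n → ‖‖f (n+1)‖‖ ≤ (1/2 : ℝ) * ‖‖f n‖‖ := by
    intro n hn
    have hbn : b + n ≠ 0 := by
      intro h; exact hb n (by linarith)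
    have hPb : (ascPochhammer ℝ n).eval b ≠ 0 := asc_ne_zero b hb n
    have hfacn : ((n.factorial : ℝ)) ≠ 0 := by positivity
    have hn1 : ((n : ℝ) + 1) ≠ 0 := by positivity
    have hstep : f (n+1) = f n * ((a + n) * z / ((b + n) * (n + 1))) := by
      simp only [hf]
      rw [ascPochhammer_succ_eval, ascPochhammer_succ_eval, Nat.factorial_succ]
      push_cast
      field_simp
      ring
    have hnR : (2 * |b| + 2 * |a| + 8 * |z|) ≤ (n : ℝ) := le_trans hN₀ (by exact_mod_cast hn)
    have h1 : |a + (n:ℝ)| ≤ |a| + n := by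
      have h := abs_add_le a (n:ℝ)
      rwa [Nat.abs_cast] at h
    have h2 : (n : ℝ) - |b| ≤ |b + n| := by
      have h := abs_add_le (b + (n:ℝ)) (-b)
      rw [show b + (n:ℝ) + -b = (n:ℝ) from by ring, abs_neg, Nat.abs_cast] at h
      linarith
    have hratio : |a + (n:ℝ)| * |z| ≤ (1/2 : ℝ) * (|b + n| * (n + 1)) := by
      nlinarith [abs_nonneg z, abs_nonneg a, abs_nonneg b, abs_nonneg (a + (n:ℝ)),
        abs_nonneg (b + (n:ℝ)), mul_nonneg (abs_nonneg z) (Nat.cast_nonneg (α := ℝ) n)]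
    have hpos : (0:ℝ) < |b + n| * ((n:ℝ) + 1) := by
      have h9 : |b + (n:ℝ)| > 0 := abs_pos.mpr hbn
      positivity
    have habs : |((b + (n:ℝ)) * ((n:ℝ) + 1))| = |b + (n:ℝ)| * ((n:ℝ)+1) := by
      rw [abs_mul, abs_of_nonneg (by positivity : (0:ℝ) ≤ (n:ℝ)+1)]
    simp only [Real.norm_eq_abs, abs_abs]
    rw [hstep, abs_mul]
    have hq : |(a + ↑n) * z / ((b + ↑n) * (↑n + 1))| ≤ 1/2 := by
      rw [abs_div, abs_mul, habs, div_le_iff₀ hpos]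
      exact hratio
    calc |f n| * |(a + ↑n) * z / ((b + ↑n) * (↑n + 1))| ≤ |f n| * (1/2) :=
          mul_le_mul_of_nonneg_left hq (abs_nonneg _)
      _ = 1/2 * |f n| := by ring
  have hs := summable_of_ratio_norm_eventually_le (f := fun n => ‖f n‖)
    (by norm_num : (1:ℝ)/2 < 1) (Filter.eventually_atTop.mpr ⟨N₀, key⟩)
  simpa [hf] using hs

lemma kummer_conv (a b z : ℝ) (hb : ∀ k : ℕ, b ≠ -(k : ℝ)) (N : ℕ) :
    ∑ k ∈ Finset.range (N + 1), (z ^ k / k.factorial) *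
      ((ascPochhammer ℝ (N - k)).eval (b - a) / (ascPochhammer ℝ (N - k)).eval b
        * (-z) ^ (N - k) / (N - k).factorial)
    = (ascPochhammer ℝ N).eval a / (ascPochhammer ℝ N).eval b * z ^ N / N.factorial := by
  have hPNb : (ascPochhammer ℝ N).eval b ≠ 0 := asc_ne_zero b hb N
  have hrefl := Finset.sum_range_reflect (fun k => (z ^ k / (k.factorial : ℝ)) *
      ((ascPochhammer ℝ (N - k)).eval (b - a) / (ascPochhammer ℝ (N - k)).eval b
        * (-z) ^ (N - k) / (N - k).factorial)) (N + 1)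
  rw [← hrefl]
  have hterm : ∀ k ∈ Finset.range (N + 1),
      (z ^ (N + 1 - 1 - k) / ((N + 1 - 1 - k).factorial : ℝ)) *
        ((ascPochhammer ℝ (N - (N + 1 - 1 - k))).eval (b - a) /
          (ascPochhammer ℝ (N - (N + 1 - 1 - k))).eval b
          * (-z) ^ (N - (N + 1 - 1 - k)) / (N - (N + 1 - 1 - k)).factorial)
      = ((-1 : ℝ) ^ k * (N.choose k : ℝ) * (ascPochhammer ℝ k).eval (b - a) *
          (ascPochhammer ℝ (N - k)).eval (b + k)) *
        (z ^ N / ((N.factorial : ℝ) * (ascPochhammer ℝ N).eval b)) := by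
    intro k hk
    have hk' : k ≤ N := Nat.lt_succ_iff.mp (Finset.mem_range.mp hk)
    have e1 : N + 1 - 1 - k = N - k := by omega
    have e2 : N - (N - k) = k := by omega
    rw [e1, e2]
    have hPkb : (ascPochhammer ℝ k).eval b ≠ 0 := asc_ne_zero b hb k
    have hPN : (ascPochhammer ℝ N).eval b =
        (ascPochhammer ℝ k).eval b * (ascPochhammer ℝ (N - k)).eval (b + k) := by
      have h := asc_eval_add k (N - k) b
      rwa [show k + (N - k) = N from by omega] at h
    have hPrb : (ascPochhammer ℝ (N - k)).eval (b + k) ≠ 0 := by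
      intro h; apply hPNb; rw [hPN, h, mul_zero]
    have hfac : ((N.factorial : ℝ)) = (N.choose k : ℝ) * k.factorial * (N - k).factorial := by
      exact_mod_cast (Nat.choose_mul_factorial_mul_factorial hk').symm
    have hz : (-z) ^ k = (-1 : ℝ) ^ k * z ^ k := by rw [neg_pow]
    have hzz : z ^ (N - k) * z ^ k = z ^ N := by rw [← pow_add]; congr 1; omega
    have hC : (N.choose k : ℝ) ≠ 0 := Nat.cast_ne_zero.mpr (Nat.choose_pos hk').ne'
    have hfk : ((k.factorial : ℝ)) ≠ 0 := by positivity
    have hfnk : (((N - k).factorial : ℝ)) ≠ 0 := by positivity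
    rw [hPN, hfac, hz, ← hzz]
    field_simp
  rw [Finset.sum_congr rfl hterm, ← Finset.sum_mul, kummer_key N b (b - a),
    show b - (b - a) = a from by ring]
  field_simp

theorem kummer_transformation_aux (a b z : ℝ) (hb : ∀ k : ℕ, b ≠ -(k : ℝ)) :
    (∑' n : ℕ, ((ascPochhammer ℝ n).eval a / (ascPochhammer ℝ n).eval b) * z ^ n / n.factorial)
      = Real.exp z *
        ∑' n : ℕ, ((ascPochhammer ℝ n).eval (b - a) / (ascPochhammer ℝ n).eval b) * (-z) ^ n
          / n.factorial := by
  have hf : Summable (fun n : ℕ => ‖z ^ n / (n.factorial : ℝ)‖) := by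
    have h := Real.summable_pow_div_factorial |z|
    apply h.congr
    intro n
    rw [Real.norm_eq_abs, abs_div, abs_pow, Nat.abs_cast]
  have hg := kummer_term_summable_norm (b - a) b (-z) hb
  have hexp : Real.exp z = ∑' n : ℕ, z ^ n / n.factorial := by
    rw [Real.exp_eq_exp_ℝ, NormedSpace.exp_eq_tsum_div]
  rw [hexp, tsum_mul_tsum_eq_tsum_sum_range_of_summable_norm hf hg]
  exact tsum_congr fun N => (kummer_conv a b z hb N).symm


theorem kummer_transformation (a b z : ℝ) (hb : ∀ k : ℕ, b ≠ -(k : ℝ)) :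
    kummerM a b z = Real.exp z * kummerM (b - a) b (-z) := by
  simp only [kummerM]
  exact kummer_transformation_aux a b z hb
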